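/- Suppose 2ζ > σ > ζ > 0 and c > 0 satisfies σ·tanh(σc) + ζ·tanh(ζc) = σ - ζ. Then (σ - ζ)·c - log(cosh(σc)) - log(cosh(ζc)) ≥ c²σ²·C, where C = (1/(c_ub²σ²))·[σc_lb·tanh(σc_lb) - log cosh(σc_lb) + ζc_lb·tanh(ζc_lb) - log cosh(ζc_lb)] > 0, with c_lb = (1/σ)·artanh(1/2 - ζ/(2σ)) and c_ub = (1/ζ)·artanh(σ/(2ζ) - 1/2). -/

import Mathlib

/-- The inverse hyperbolic tangent. -/
noncomputable def artanh (x : ℝ) : ℝ := (1 / 2) * Real.log ((1 + x) / (1 - x))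

private lemma hasDerivAt_tanh' (x : ℝ) :
    HasDerivAt Real.tanh (1 / Real.cosh x ^ 2) x := by
  have h : HasDerivAt (fun y => Real.sinh y / Real.cosh y)
      ((Real.cosh x * Real.cosh x - Real.sinh x * Real.sinh x) / Real.cosh x ^ 2) x :=
    (Real.hasDerivAt_sinh x).div (Real.hasDerivAt_cosh x) (Real.cosh_pos x).ne'
  have hfun : (fun y => Real.sinh y / Real.cosh y) = Real.tanh := by
    funext y; rw [Real.tanh_eq_sinh_div_cosh]
  rw [hfun] at h
  convert h using 2
  have := Real.cosh_sq_sub_sinh_sq x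
  nlinarith

private lemma tanh_strictMono' : StrictMono Real.tanh := by
  apply strictMono_of_deriv_pos
  intro x
  rw [(hasDerivAt_tanh' x).deriv]
  positivity

private lemma tanh_artanh' {y : ℝ} (h1 : -1 < y) (h2 : y < 1) :
    Real.tanh (artanh y) = y := by
  have hy : (0:ℝ) < (1 + y) / (1 - y) := div_pos (by linarith) (by linarith)
  have ht2 : Real.exp (artanh y) * Real.exp (artanh y) = (1 + y) / (1 - y) := by
    rw [← Real.exp_add]
    have : artanh y + artanh y = Real.log ((1 + y) / (1 - y)) := by unfold artanh; ring
    rw [this, Real.exp_log hy]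
  set t := Real.exp (artanh y) with ht
  have htpos : 0 < t := Real.exp_pos _
  rw [Real.tanh_eq_sinh_div_cosh, Real.sinh_eq, Real.cosh_eq, Real.exp_neg, ← ht]
  rw [div_eq_iff (by positivity)]
  have h1y : (1:ℝ) - y ≠ 0 := by linarith
  field_simp at ht2 ⊢
  nlinarith [ht2]

private lemma artanh_pos' {y : ℝ} (h0 : 0 < y) (h1 : y < 1) : 0 < artanh y := by
  unfold artanh
  have hr : 1 < (1 + y) / (1 - y) := by
    rw [lt_div_iff₀ (by linarith)]; linarith
  have := Real.log_pos hr
  linarith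

/-- The gap function `x ↦ x tanh x - log cosh x`. -/
noncomputable def ggap (x : ℝ) : ℝ := x * Real.tanh x - Real.log (Real.cosh x)

private lemma hasDerivAt_ggap (x : ℝ) : HasDerivAt ggap (x / Real.cosh x ^ 2) x := by
  have h1 : HasDerivAt (fun y : ℝ => y * Real.tanh y)
      (1 * Real.tanh x + x * (1 / Real.cosh x ^ 2)) x :=
    (hasDerivAt_id x).mul (hasDerivAt_tanh' x)
  have h2 : HasDerivAt (fun y : ℝ => Real.log (Real.cosh y))
      (Real.sinh x / Real.cosh x) x :=
    (Real.hasDerivAt_cosh x).log (Real.cosh_pos x).ne'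
  have h := h1.sub h2
  refine h.congr_deriv ?_
  rw [Real.tanh_eq_sinh_div_cosh]
  have hcx : Real.cosh x ≠ 0 := (Real.cosh_pos x).ne'
  field_simp
  ring

private lemma ggap_strictMonoOn : StrictMonoOn ggap (Set.Ici 0) := by
  apply strictMonoOn_of_deriv_pos (convex_Ici 0)
  · exact (continuous_iff_continuousAt.2
      fun x => (hasDerivAt_ggap x).continuousAt).continuousOn
  · intro x hx
    rw [interior_Ici] at hx
    rw [(hasDerivAt_ggap x).deriv]
    exact div_pos hx (by positivity)

private lemma ggap_pos {x : ℝ} (hx : 0 < x) : 0 < ggap x := by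
  have h := ggap_strictMonoOn (Set.self_mem_Ici) (Set.mem_Ici.2 hx.le) hx
  simpa [ggap, Real.tanh_zero, Real.cosh_zero] using h

set_option maxHeartbeats 1600000 in
private lemma gap_aux (σ ζ c clb cub C : ℝ) (hζ : 0 < ζ) (hζσ : ζ < σ)
    (hσ : σ < 2 * ζ) (hc : 0 < c)
    (heq : σ * Real.tanh (σ * c) + ζ * Real.tanh (ζ * c) = σ - ζ)
    (hclbdef : clb = (1 / σ) * artanh (1 / 2 - ζ / (2 * σ)))
    (hcubdef : cub = (1 / ζ) * artanh (σ / (2 * ζ) - 1 / 2))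
    (hCde : C = (1 / (cub ^ 2 * σ ^ 2)) *
      (σ * clb * Real.tanh (σ * clb) - Real.log (Real.cosh (σ * clb))
        + ζ * clb * Real.tanh (ζ * clb) - Real.log (Real.cosh (ζ * clb)))) :
    0 < C ∧
      (σ - ζ) * c - Real.log (Real.cosh (σ * c)) - Real.log (Real.cosh (ζ * c))
        ≥ c ^ 2 * σ ^ 2 * C := by

  have hσ0 : 0 < σ := hζ.trans hζσ
  set y1 : ℝ := 1 / 2 - ζ / (2 * σ) with hy1def
  set y2 : ℝ := σ / (2 * ζ) - 1 / 2 with hy2def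
  have hy1a : 0 < y1 := by
    rw [hy1def]
    have : ζ / (2 * σ) < 1 / 2 := by rw [div_lt_iff₀ (by linarith)]; linarith
    linarith
  have hy1b : y1 < 1 := by
    rw [hy1def]
    have : 0 < ζ / (2 * σ) := div_pos hζ (by linarith)
    linarith
  have hy2a : 0 < y2 := by
    rw [hy2def]
    have : 1 / 2 < σ / (2 * ζ) := by rw [lt_div_iff₀ (by linarith)]; linarith
    linarith
  have hy2b : y2 < 1 := by
    rw [hy2def]
    have : σ / (2 * ζ) < 3 / 2 := by rw [div_lt_iff₀ (by linarith)]; linarith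
    linarith
  have hta1 : Real.tanh (artanh y1) = y1 := tanh_artanh' (by linarith) hy1b
  have hta2 : Real.tanh (artanh y2) = y2 := tanh_artanh' (by linarith) hy2b
  have ha1 : 0 < artanh y1 := artanh_pos' hy1a hy1b
  have ha2 : 0 < artanh y2 := artanh_pos' hy2a hy2b
  -- tanh inequalities from heq
  have htmono := tanh_strictMono'
  have h0t : Real.tanh 0 = 0 := Real.tanh_zero
  have hnn : 0 ≤ Real.tanh (ζ * c) := by
    have := htmono.le_iff_le.2 (by positivity : (0:ℝ) ≤ ζ * c)
    rwa [h0t] at this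
  have hts : Real.tanh (ζ * c) ≤ Real.tanh (σ * c) :=
    htmono.le_iff_le.2 (by nlinarith)
  have hub1 : y1 ≤ Real.tanh (σ * c) := by
    rw [hy1def, show (1:ℝ) / 2 - ζ / (2 * σ) = (σ - ζ) / (2 * σ) by
      first | (field_simp; ring) | field_simp]
    rw [div_le_iff₀ (by linarith)]
    nlinarith
  have hub2 : Real.tanh (ζ * c) ≤ y2 := by
    rw [hy2def, show σ / (2 * ζ) - (1:ℝ) / 2 = (σ - ζ) / (2 * ζ) by
      first | (field_simp; ring) | field_simp]
    rw [le_div_iff₀ (by linarith)]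
    nlinarith
  -- c bounds
  have hlb : artanh y1 ≤ σ * c := htmono.le_iff_le.1 (by rw [hta1]; exact hub1)
  have hub : ζ * c ≤ artanh y2 := htmono.le_iff_le.1 (by rw [hta2]; exact hub2)
  have hclb : σ * clb = artanh y1 := by
    rw [hclbdef]; field_simp
  have hcub : ζ * cub = artanh y2 := by
    rw [hcubdef]; field_simp
  have hclb_pos : 0 < clb := by
    rw [hclbdef]; positivity
  have hcub_pos : 0 < cub := by
    rw [hcubdef]; positivity
  have hclb_le : clb ≤ c := by
    have : σ * clb ≤ σ * c := by rw [hclb]; exact hlb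
    exact le_of_mul_le_mul_left this hσ0
  have hcub_ge : c ≤ cub := by
    have : ζ * c ≤ ζ * cub := by rw [hcub]; exact hub
    exact le_of_mul_le_mul_left this hζ
  -- C in terms of ggap
  have hCdef : C = (1 / (cub ^ 2 * σ ^ 2)) * (ggap (σ * clb) + ggap (ζ * clb)) := by
    rw [hCde]; unfold ggap; ring
  have hg1 : 0 < ggap (σ * clb) := ggap_pos (by positivity)
  have hg2 : 0 < ggap (ζ * clb) := ggap_pos (by positivity)
  have hCpos : 0 < C := by
    rw [hCdef]
    have h' : 0 < 1 / (cub ^ 2 * σ ^ 2) := by positivity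
    exact mul_pos h' (by linarith)
  refine ⟨hCpos, ?_⟩
  -- rewrite LHS via heq
  have hLHS : (σ - ζ) * c - Real.log (Real.cosh (σ * c)) - Real.log (Real.cosh (ζ * c))
      = ggap (σ * c) + ggap (ζ * c) := by
    rw [← heq]; unfold ggap; ring
  have key1 : ggap (σ * clb) ≤ ggap (σ * c) :=
    ggap_strictMonoOn.monotoneOn (Set.mem_Ici.2 (by positivity))
      (Set.mem_Ici.2 (by positivity)) (by nlinarith)
  have key2 : ggap (ζ * clb) ≤ ggap (ζ * c) :=
    ggap_strictMonoOn.monotoneOn (Set.mem_Ici.2 (by positivity))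
      (Set.mem_Ici.2 (by positivity)) (by nlinarith)
  have hCval : cub ^ 2 * σ ^ 2 * C = ggap (σ * clb) + ggap (ζ * clb) := by
    rw [hCdef]
    field_simp
  have hsq : c ^ 2 ≤ cub ^ 2 := by nlinarith
  have hle : c ^ 2 * σ ^ 2 * C ≤ cub ^ 2 * σ ^ 2 * C := by
    have h1 : c ^ 2 * σ ^ 2 ≤ cub ^ 2 * σ ^ 2 :=
      mul_le_mul_of_nonneg_right hsq (by positivity)
    exact mul_le_mul_of_nonneg_right h1 hCpos.le
  rw [hLHS]
  linarith

theorem gap_lower_bound (σ ζ c : ℝ) (hζ : 0 < ζ) (hζσ : ζ < σ) (hσ : σ < 2 * ζ)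
    (hc : 0 < c)
    (heq : σ * Real.tanh (σ * c) + ζ * Real.tanh (ζ * c) = σ - ζ) :
    let clb := (1 / σ) * artanh (1 / 2 - ζ / (2 * σ))
    let cub := (1 / ζ) * artanh (σ / (2 * ζ) - 1 / 2)
    let C := (1 / (cub ^ 2 * σ ^ 2)) *
      (σ * clb * Real.tanh (σ * clb) - Real.log (Real.cosh (σ * clb))
        + ζ * clb * Real.tanh (ζ * clb) - Real.log (Real.cosh (ζ * clb)))
    0 < C ∧
      (σ - ζ) * c - Real.log (Real.cosh (σ * c)) - Real.log (Real.cosh (ζ * c))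
        ≥ c ^ 2 * σ ^ 2 * C := by
  intro clb cub C
  exact gap_aux σ ζ c clb cub C hζ hζσ hσ hc heq rfl rfl rfl
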